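/- Assume H : ℝ → ℝ is continuously differentiable and H(s) = 0 for all s ≤ 0. Then for every t > 0, the one-sided spatial derivative of v at x = L satisfies ∂v/∂x (L,t) = (1/c1) H'(t) + (2/c1) Σ_{n=1}^{⌊c1 t/(2L)⌋} H'(t − 2nL/c1). -/

import Mathlib

/-- the one-sided (from the left) spatial derivative of `v` at `x = L`
equals `(1/c1) H'(t) + (2/c1) Σ_{n=1}^{⌊c1 t/(2L)⌋} H'(t − 2nL/c1)` for every `t > 0`. -/
theorem stmt_6 (L c1 : ℝ) (hL : 0 < L) (hc1 : 0 < c1)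
    (H : ℝ → ℝ) (hH : ContDiff ℝ 1 H) (hH0 : ∀ s ≤ (0 : ℝ), H s = 0)
    (v : ℝ → ℝ → ℝ)
    (hv : ∀ x t : ℝ, 0 ≤ x → x ≤ L → 0 ≤ t →
      v x t = (∑ n ∈ Finset.Icc (0 : ℤ) ⌊(c1 * t + x - L) / (2 * L)⌋,
                  H (t + (x - (2 * (n : ℝ) + 1) * L) / c1))
            - ∑ n ∈ Finset.Icc (0 : ℤ) ⌊(c1 * t - x - L) / (2 * L)⌋,
                  H (t - (x + (2 * (n : ℝ) + 1) * L) / c1)) :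
    ∀ t : ℝ, 0 < t →
      HasDerivWithinAt (fun x => v x t)
        (1 / c1 * deriv H t
          + 2 / c1 * ∑ n ∈ Finset.Icc (1 : ℤ) ⌊c1 * t / (2 * L)⌋,
              deriv H (t - 2 * (n : ℝ) * L / c1))
        (Set.Iio L) L := by
  intro t ht
  have h2L : (0:ℝ) < 2 * L := by linarith
  set N : ℤ := ⌊c1 * t / (2 * L)⌋ with hNdef
  have hN0 : (0:ℤ) ≤ N := Int.le_floor.2 (by push_cast; positivity)
  have hdH : Differentiable ℝ H := hH.differentiable one_ne_zero
  -- deriv H vanishes on negatives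
  have hd0 : ∀ s : ℝ, s < 0 → deriv H s = 0 := by
    intro s hs
    have hev : H =ᶠ[nhds s] fun _ => (0:ℝ) := by
      filter_upwards [Iio_mem_nhds hs] with y hy using hH0 y hy.le
    rw [hev.deriv_eq]; simp
  set F : ℝ → ℝ := fun x =>
      (∑ n ∈ Finset.Icc (0:ℤ) N, H (t + (x - (2 * (n:ℝ) + 1) * L) / c1))
        - ∑ n ∈ Finset.Icc (0:ℤ) N, H (t - (x + (2 * (n:ℝ) + 1) * L) / c1) with hFdef
  -- v (·, t) = F on [0, L]
  have key : ∀ x : ℝ, 0 ≤ x → x ≤ L → v x t = F x := by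
    intro x hx0 hxL
    rw [hv x t hx0 hxL ht.le, hFdef]
    have hs1 : (∑ n ∈ Finset.Icc (0:ℤ) ⌊(c1 * t + x - L) / (2 * L)⌋,
        H (t + (x - (2 * (n:ℝ) + 1) * L) / c1))
        = ∑ n ∈ Finset.Icc (0:ℤ) N, H (t + (x - (2 * (n:ℝ) + 1) * L) / c1) := by
      apply Finset.sum_subset
      · apply Finset.Icc_subset_Icc_right
        apply Int.floor_le_floor
        apply div_le_div_of_nonneg_right (by linarith) h2L.le
      · intro n hn hn'
        simp only [Finset.mem_Icc] at hn hn'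
        have hlt : ⌊(c1 * t + x - L) / (2 * L)⌋ < n := by omega
        have ha : (c1 * t + x - L) / (2 * L) < (n:ℝ) := by
          exact_mod_cast Int.floor_lt.mp hlt
        have h1 : c1 * t + x - L < (n:ℝ) * (2 * L) := (div_lt_iff₀ h2L).mp ha
        apply hH0
        have h2 : (x - (2 * (n:ℝ) + 1) * L) / c1 ≤ -t := by
          rw [div_le_iff₀ hc1]; nlinarith
        linarith
    have hs2 : (∑ n ∈ Finset.Icc (0:ℤ) ⌊(c1 * t - x - L) / (2 * L)⌋,
        H (t - (x + (2 * (n:ℝ) + 1) * L) / c1))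
        = ∑ n ∈ Finset.Icc (0:ℤ) N, H (t - (x + (2 * (n:ℝ) + 1) * L) / c1) := by
      apply Finset.sum_subset
      · apply Finset.Icc_subset_Icc_right
        apply Int.floor_le_floor
        apply div_le_div_of_nonneg_right (by linarith) h2L.le
      · intro n hn hn'
        simp only [Finset.mem_Icc] at hn hn'
        have hlt : ⌊(c1 * t - x - L) / (2 * L)⌋ < n := by omega
        have ha : (c1 * t - x - L) / (2 * L) < (n:ℝ) := by
          exact_mod_cast Int.floor_lt.mp hlt
        have h1 : c1 * t - x - L < (n:ℝ) * (2 * L) := (div_lt_iff₀ h2L).mp ha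
        apply hH0
        have h2 : t ≤ (x + (2 * (n:ℝ) + 1) * L) / c1 := by
          rw [le_div_iff₀ hc1]; nlinarith
        linarith
    rw [hs1, hs2]
  -- F has a derivative at L
  have hF' : HasDerivAt F
      ((∑ n ∈ Finset.Icc (0:ℤ) N, deriv H (t + (L - (2 * (n:ℝ) + 1) * L) / c1) * (1 / c1))
        - ∑ n ∈ Finset.Icc (0:ℤ) N,
            deriv H (t - (L + (2 * (n:ℝ) + 1) * L) / c1) * (-(1 / c1))) L := by
    apply HasDerivAt.sub
    · apply HasDerivAt.fun_sum
      intro n _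
      have hg : HasDerivAt (fun x : ℝ => t + (x - (2 * (n:ℝ) + 1) * L) / c1) (1 / c1) L := by
        simpa using (((hasDerivAt_id L).sub_const ((2 * (n:ℝ) + 1) * L)).div_const c1).const_add t
      exact ((hdH _).hasDerivAt).comp L hg
    · apply HasDerivAt.fun_sum
      intro n _
      have hg : HasDerivAt (fun x : ℝ => t - (x + (2 * (n:ℝ) + 1) * L) / c1) (-(1 / c1)) L := by
        simpa using (((hasDerivAt_id L).add_const ((2 * (n:ℝ) + 1) * L)).div_const c1).const_sub t
      exact ((hdH _).hasDerivAt).comp L hg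
  -- simplify the derivative value
  have hval : (∑ n ∈ Finset.Icc (0:ℤ) N, deriv H (t + (L - (2 * (n:ℝ) + 1) * L) / c1) * (1 / c1))
        - ∑ n ∈ Finset.Icc (0:ℤ) N, deriv H (t - (L + (2 * (n:ℝ) + 1) * L) / c1) * (-(1 / c1))
      = 1 / c1 * deriv H t
        + 2 / c1 * ∑ n ∈ Finset.Icc (1:ℤ) N, deriv H (t - 2 * (n:ℝ) * L / c1) := by
    have e1 : ∀ n : ℤ, t + (L - (2 * (n:ℝ) + 1) * L) / c1 = t - 2 * (n:ℝ) * L / c1 := by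
      intro n; field_simp; ring
    have e2 : ∀ n : ℤ, t - (L + (2 * (n:ℝ) + 1) * L) / c1 = t - 2 * ((n:ℝ) + 1) * L / c1 := by
      intro n; field_simp; ring
    simp only [e1, e2]
    rw [← Finset.sum_mul, ← Finset.sum_mul]
    have hsplit : Finset.Icc (0:ℤ) N = insert 0 (Finset.Icc 1 N) := by
      ext m; simp [Finset.mem_Icc]; omega
    have hS1 : (∑ n ∈ Finset.Icc (0:ℤ) N, deriv H (t - 2 * (n:ℝ) * L / c1))
        = deriv H t + ∑ n ∈ Finset.Icc (1:ℤ) N, deriv H (t - 2 * (n:ℝ) * L / c1) := by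
      rw [hsplit, Finset.sum_insert (by simp)]
      norm_num
    have hS2 : (∑ n ∈ Finset.Icc (0:ℤ) N, deriv H (t - 2 * ((n:ℝ) + 1) * L / c1))
        = ∑ n ∈ Finset.Icc (1:ℤ) N, deriv H (t - 2 * (n:ℝ) * L / c1) := by
      have himg : Finset.Icc (1:ℤ) (N + 1) = (Finset.Icc (0:ℤ) N).image (· + 1) := by
        rw [Finset.image_add_right_Icc]; norm_num
      have hrw : (∑ n ∈ Finset.Icc (0:ℤ) N, deriv H (t - 2 * ((n:ℝ) + 1) * L / c1))
          = ∑ m ∈ Finset.Icc (1:ℤ) (N + 1), deriv H (t - 2 * (m:ℝ) * L / c1) := by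
        rw [himg, Finset.sum_image (by intro a _ b _ h; have h' : a + 1 = b + 1 := h; omega)]
        apply Finset.sum_congr rfl
        intro n _; push_cast; ring_nf
      rw [hrw]
      have htop : Finset.Icc (1:ℤ) (N + 1) = insert (N + 1) (Finset.Icc 1 N) := by
        ext m; simp [Finset.mem_Icc]; omega
      rw [htop, Finset.sum_insert (by simp)]
      have hneg : t - 2 * ((N:ℝ) + 1) * L / c1 < 0 := by
        have : c1 * t / (2 * L) < (N:ℝ) + 1 := by
          have := Int.lt_floor_add_one (c1 * t / (2 * L))
          push_cast at this ⊢; linarith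
        have h3 : c1 * t < ((N:ℝ) + 1) * (2 * L) := (div_lt_iff₀ h2L).mp this
        rw [sub_neg, lt_div_iff₀ hc1]; nlinarith
      rw [show ((N:ℤ) + 1 : ℤ) = N + 1 from rfl]
      push_cast
      rw [hd0 _ hneg]
      ring
    rw [hS1, hS2]
    ring
  rw [hval] at hF'
  apply hF'.hasDerivWithinAt.congr_of_eventuallyEq _ (key L hL.le le_rfl)
  have hmem : Set.Ioi (0:ℝ) ∈ nhdsWithin L (Set.Iio L) :=
    mem_nhdsWithin_of_mem_nhds (Ioi_mem_nhds hL)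
  filter_upwards [self_mem_nhdsWithin, hmem] with x hx1 hx2
  exact key x hx2.le hx1.le
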